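/- Let p, q be coprime positive integers, k a positive integer, and M ∈ {1, 2, 4}, with q odd when M > 1. Then the set Λ_{k,q,M} = (1/(2k))ℤ × ℤ⁴ × (2πq/M)ℤ is a discrete cocompact subgroup (a lattice) of Osc₂(1, p/q): it is a subgroup, it is discrete, and the quotient space Osc₂(1, p/q)/Λ_{k,q,M} is compact. -/

import Mathlib

open Real

noncomputable section

/-- rotation by angle `θ` acting on `ℝ × ℝ` -/
def rot (θ : ℝ) (p : ℝ × ℝ) : ℝ × ℝ :=
  (Real.cos θ * p.1 - Real.sin θ * p.2, Real.sin θ * p.1 + Real.cos θ * p.2)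

/-- the matrix `[[0,1],[-1,0]]` acting on `ℝ × ℝ` -/
def Jpair (p : ℝ × ℝ) : ℝ × ℝ := (p.2, -p.1)

/-- euclidean inner product on `ℝ × ℝ` -/
def dot2 (p q : ℝ × ℝ) : ℝ := p.1 * q.1 + p.2 * q.2

/-- underlying set `ℝ × ℝ^{2n} × ℝ` of the oscillator group, where the middle
factor `ℝ^{2n}` is recorded as `n` pairs `(x_i, y_i)`. -/
abbrev OscG (n : ℕ) := ℝ × (Fin n → ℝ × ℝ) × ℝ

/-- multiplication of the oscillator group `Osc_n(λ₁,…,λₙ)`: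
`(z₁,v₁,t₁)·(z₂,v₂,t₂) = (z₁+z₂+½ v₁ᵀ J R(t₁) v₂, v₁ + R(t₁)v₂, t₁+t₂)`,
where `R(t)` rotates the `i`-th pair by the angle `λ_i t`. -/
def oscMul {n : ℕ} (lam : Fin n → ℝ) (g h : OscG n) : OscG n :=
  (g.1 + h.1 + (1/2) * ∑ i, dot2 (g.2.1 i) (Jpair (rot (lam i * g.2.2) (h.2.1 i))),
   fun i => g.2.1 i + rot (lam i * g.2.2) (h.2.1 i),
   g.2.2 + h.2.2)

/-- identity element of the oscillator group -/
def oscOne (n : ℕ) : OscG n := (0, fun _ => (0, 0), 0)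

/-- inverse in the oscillator group: `(z,v,t)⁻¹ = (-z, -R(-t)v, -t)` -/
def oscInv {n : ℕ} (lam : Fin n → ℝ) (g : OscG n) : OscG n :=
  (-g.1, fun i => -(rot (lam i * (-g.2.2)) (g.2.1 i)), -g.2.2)

/-- `Γ` is a lattice of the oscillator group: a discrete subgroup with compact
quotient (the quotient by the right multiplication action of `Γ`). -/
structure IsLattice {n : ℕ} (lam : Fin n → ℝ) (Γ : Set (OscG n)) : Prop where
  one_mem : oscOne n ∈ Γ
  mul_mem : ∀ g ∈ Γ, ∀ h ∈ Γ, oscMul lam g h ∈ Γ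
  inv_mem : ∀ g ∈ Γ, oscInv lam g ∈ Γ
  discrete : DiscreteTopology Γ
  cocompact : CompactSpace (Quot (fun g h : OscG n => ∃ γ ∈ Γ, h = oscMul lam g γ))

/-- `Q(X) = 2ad + Σ_k (b_k² + c_k²)/λ_k` for `X = (d,(b₁,c₁,…,bₙ,cₙ),a)` -/
def Qform {n : ℕ} (lam : Fin n → ℝ) (d a : ℝ) (b c : Fin n → ℝ) : ℝ :=
  2 * a * d + ∑ k, (b k ^ 2 + c k ^ 2) / lam k

/-- the geodesic through the identity with initial velocity
`X = (d,(b₁,c₁,…,bₙ,cₙ),a)` for the bi-invariant Lorentzian metric on the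
oscillator group. -/
def geo {n : ℕ} (lam : Fin n → ℝ) (d : ℝ) (b c : Fin n → ℝ) (a : ℝ) (s : ℝ) : OscG n :=
  if a = 0 then (d * s, fun j => (b j * s, c j * s), 0)
  else
    ((d + (1/(2*a)) * ∑ k, (b k ^ 2 + c k ^ 2) / lam k) * s
        - (1/(2*a^2)) * ∑ k, ((b k ^ 2 + c k ^ 2) / (lam k)^2) * Real.sin (lam k * a * s),
     fun j => ((1/(a * lam j)) * (b j * Real.sin (lam j * a * s)
                  + c j * Real.cos (lam j * a * s) - c j),
               (1/(a * lam j)) * (-(b j) * Real.cos (lam j * a * s)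
                  + c j * Real.sin (lam j * a * s) + b j)),
     a * s)

/-- the frequencies `(1, p/q)` of the oscillator group `Osc₂(1, p/q)` -/
def lam2 (p q : ℕ) : Fin 2 → ℝ := ![1, (p : ℝ) / q]

/-- the set `(1/(2k))ℤ × ℤ⁴ × Tℤ ⊆ Osc₂(1, p/q)` -/
def LamO2 (k : ℕ) (T : ℝ) : Set (OscG 2) :=
  {g | (∃ m : ℤ, g.1 = m / (2 * k))
    ∧ (∀ i : Fin 2, (∃ a : ℤ, (g.2.1 i).1 = a) ∧ (∃ b : ℤ, (g.2.1 i).2 = b))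
    ∧ ∃ c : ℤ, g.2.2 = c * T}

section AuxLemmas

lemma cosIntPi (n : ℤ) : ∃ a : ℤ, Real.cos (n * (π/2)) = a := by
  obtain ⟨m, r, h0, h4, rfl⟩ : ∃ m r : ℤ, 0 ≤ r ∧ r < 4 ∧ n = 4*m + r :=
    ⟨n / 4, n % 4, Int.emod_nonneg n (by norm_num), Int.emod_lt_of_pos n (by norm_num),
      (Int.mul_ediv_add_emod n 4).symm⟩
  have h : ((4*m + r : ℤ) : ℝ) * (π/2) = (r:ℝ) * (π/2) + m * (2*π) := by push_cast; ring
  rw [h, Real.cos_add_int_mul_two_pi]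
  interval_cases r
  · exact ⟨1, by norm_num⟩
  · exact ⟨0, by norm_num [Real.cos_pi_div_two]⟩
  · refine ⟨-1, ?_⟩
    push_cast
    rw [show (2:ℝ)*(π/2) = π by ring, Real.cos_pi]
  · refine ⟨0, ?_⟩
    push_cast
    rw [show (3:ℝ)*(π/2) = π/2 + π by ring, Real.cos_add_pi, Real.cos_pi_div_two]
    norm_num

lemma sinIntPi (n : ℤ) : ∃ a : ℤ, Real.sin (n * (π/2)) = a := by
  obtain ⟨a, ha⟩ := cosIntPi (1 - n)
  refine ⟨a, ?_⟩
  rw [← Real.cos_pi_div_two_sub, ← ha]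
  congr 1; push_cast [Int.cast_sub]; ring

lemma rot_linear (θ : ℝ) (x y : ℝ × ℝ) : rot θ (x + y) = rot θ x + rot θ y := by
  obtain ⟨a, b⟩ := x; obtain ⟨c, d⟩ := y
  simp only [rot, Prod.mk_add_mk, Prod.mk.injEq, Prod.fst, Prod.snd]
  constructor <;> ring

lemma rot_rot_neg (θ : ℝ) (x : ℝ × ℝ) : rot θ (rot (-θ) x) = x := by
  obtain ⟨a, b⟩ := x
  simp only [rot, Real.cos_neg, Real.sin_neg, Prod.mk.injEq]
  constructor
  · linear_combination a * Real.sin_sq_add_cos_sq θ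
  · linear_combination b * Real.sin_sq_add_cos_sq θ

lemma rot_pair_int (θ : ℝ) (hA : ∃ A : ℤ, Real.cos θ = A) (hB : ∃ B : ℤ, Real.sin θ = B)
    (w : ℝ × ℝ) (hw : (∃ a : ℤ, w.1 = a) ∧ (∃ b : ℤ, w.2 = b)) :
    (∃ a : ℤ, (rot θ w).1 = a) ∧ (∃ b : ℤ, (rot θ w).2 = b) := by
  obtain ⟨A, hA⟩ := hA; obtain ⟨B, hB⟩ := hB
  obtain ⟨⟨c, hc⟩, ⟨d, hd⟩⟩ := hw
  constructor
  · refine ⟨A*c - B*d, ?_⟩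
    show Real.cos θ * w.1 - Real.sin θ * w.2 = _
    rw [hA, hB, hc, hd]; push_cast; ring
  · refine ⟨B*c + A*d, ?_⟩
    show Real.sin θ * w.1 + Real.cos θ * w.2 = _
    rw [hA, hB, hc, hd]; push_cast; ring

lemma rotJ_dot_int (θ : ℝ) (hA : ∃ A : ℤ, Real.cos θ = A) (hB : ∃ B : ℤ, Real.sin θ = B)
    (v w : ℝ × ℝ) (hv : (∃ a : ℤ, v.1 = a) ∧ (∃ b : ℤ, v.2 = b))
    (hw : (∃ a : ℤ, w.1 = a) ∧ (∃ b : ℤ, w.2 = b)) :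
    ∃ s : ℤ, dot2 v (Jpair (rot θ w)) = s := by
  obtain ⟨A, hA⟩ := hA; obtain ⟨B, hB⟩ := hB
  obtain ⟨⟨a, ha⟩, ⟨b, hb⟩⟩ := hv; obtain ⟨⟨c, hc⟩, ⟨d, hd⟩⟩ := hw
  refine ⟨a*(B*c + A*d) - b*(A*c - B*d), ?_⟩
  show v.1 * (rot θ w).2 + v.2 * -(rot θ w).1 = _
  show v.1 * (Real.sin θ * w.1 + Real.cos θ * w.2)
      + v.2 * -(Real.cos θ * w.1 - Real.sin θ * w.2) = _
  rw [hA, hB, ha, hb, hc, hd]; push_cast; ring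

lemma angle_key (p q M : ℕ) (hq : 0 < q) (hM : M = 1 ∨ M = 2 ∨ M = 4) (c : ℤ) (i : Fin 2) :
    ∃ n : ℤ, lam2 p q i * ((c : ℝ) * (2 * π * q / M)) = n * (π/2) := by
  obtain ⟨μ, hμ⟩ : ∃ μ : ℕ, (M : ℝ) * μ = 4 := by
    rcases hM with h|h|h <;> subst h
    · exact ⟨4, by norm_num⟩
    · exact ⟨2, by norm_num⟩
    · exact ⟨1, by norm_num⟩
  have hM0 : (M : ℝ) ≠ 0 := by rcases hM with h|h|h <;> subst h <;> norm_num
  have hq0 : (q : ℝ) ≠ 0 := Nat.cast_ne_zero.2 hq.ne'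
  have hT : (2 * π * q / M : ℝ) = (μ * q : ℕ) * (π/2) := by
    rw [div_eq_iff hM0]
    push_cast
    linear_combination (-(π * (q:ℝ) / 2)) * hμ
  have l0 : lam2 p q 0 = 1 := rfl
  have l1 : lam2 p q 1 = (p : ℝ) / q := rfl
  fin_cases i
  · refine ⟨c * (μ * q : ℕ), ?_⟩
    show lam2 p q 0 * _ = _
    rw [l0, hT]; push_cast; ring
  · refine ⟨c * (μ * p : ℕ), ?_⟩
    show lam2 p q 1 * _ = _
    rw [l1, hT]
    push_cast
    field_simp

lemma int_eq_of_close {a b : ℤ} {d : ℝ} (hd : 0 < d) (h : |(a:ℝ)*d - (b:ℝ)*d| < d) : a = b := by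
  have h1 : |(a:ℝ) - b| * d < 1 * d := by
    rw [one_mul, ← abs_of_pos hd, ← abs_mul]
    calc |((a:ℝ) - b) * d| = |(a:ℝ)*d - (b:ℝ)*d| := by ring_nf
    _ < d := h
    _ = |d| := (abs_of_pos hd).symm
  have h2 : |(a:ℝ) - b| < 1 := (mul_lt_mul_iff_of_pos_right hd).mp h1
  have h3 : |a - b| < 1 := by exact_mod_cast h2
  have := abs_lt.mp h3
  omega

lemma rot_bound (θ : ℝ) (x : ℝ × ℝ) (h1 : |x.1| ≤ 1) (h2 : |x.2| ≤ 1) :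
    |(rot θ x).1| ≤ 2 ∧ |(rot θ x).2| ≤ 2 := by
  have hc := Real.abs_cos_le_one θ
  have hs := Real.abs_sin_le_one θ
  have e1 : |Real.cos θ * x.1| ≤ 1 := by
    rw [abs_mul]; exact mul_le_one₀ hc (abs_nonneg _) h1
  have e2 : |Real.sin θ * x.2| ≤ 1 := by
    rw [abs_mul]; exact mul_le_one₀ hs (abs_nonneg _) h2
  have e3 : |Real.sin θ * x.1| ≤ 1 := by
    rw [abs_mul]; exact mul_le_one₀ hs (abs_nonneg _) h1
  have e4 : |Real.cos θ * x.2| ≤ 1 := by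
    rw [abs_mul]; exact mul_le_one₀ hc (abs_nonneg _) h2
  constructor
  · calc |(rot θ x).1| = |Real.cos θ * x.1 - Real.sin θ * x.2| := rfl
    _ ≤ |Real.cos θ * x.1| + |Real.sin θ * x.2| := abs_sub _ _
    _ ≤ 2 := by linarith
  · calc |(rot θ x).2| = |Real.sin θ * x.1 + Real.cos θ * x.2| := rfl
    _ ≤ |Real.sin θ * x.1| + |Real.cos θ * x.2| := abs_add_le _ _
    _ ≤ 2 := by linarith

lemma reduce_pair (θ : ℝ) (v : ℝ × ℝ) :
    ∃ w : ℝ × ℝ, (∃ a : ℤ, w.1 = a) ∧ (∃ b : ℤ, w.2 = b) ∧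
      |(v + rot θ w).1| ≤ 2 ∧ |(v + rot θ w).2| ≤ 2 := by
  set c : ℝ × ℝ := rot (-θ) v with hc
  refine ⟨(((-⌊c.1⌋ : ℤ) : ℝ), ((-⌊c.2⌋ : ℤ) : ℝ)), ⟨-⌊c.1⌋, rfl⟩, ⟨-⌊c.2⌋, rfl⟩, ?_⟩
  have hv : v + rot θ (((-⌊c.1⌋ : ℤ) : ℝ), ((-⌊c.2⌋ : ℤ) : ℝ))
      = rot θ (c + (((-⌊c.1⌋ : ℤ) : ℝ), ((-⌊c.2⌋ : ℤ) : ℝ))) := by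
    rw [rot_linear, hc, rot_rot_neg]
  rw [hv]
  have hx1 : |(c + (((-⌊c.1⌋ : ℤ) : ℝ), ((-⌊c.2⌋ : ℤ) : ℝ))).1| ≤ 1 := by
    have : (c + (((-⌊c.1⌋ : ℤ) : ℝ), ((-⌊c.2⌋ : ℤ) : ℝ))).1 = Int.fract c.1 := by
      show c.1 + ((-⌊c.1⌋ : ℤ) : ℝ) = c.1 - (⌊c.1⌋ : ℝ)
      push_cast; ring
    rw [this, abs_of_nonneg (Int.fract_nonneg _)]
    exact (Int.fract_lt_one _).le
  have hx2 : |(c + (((-⌊c.1⌋ : ℤ) : ℝ), ((-⌊c.2⌋ : ℤ) : ℝ))).2| ≤ 1 := by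
    have : (c + (((-⌊c.1⌋ : ℤ) : ℝ), ((-⌊c.2⌋ : ℤ) : ℝ))).2 = Int.fract c.2 := by
      show c.2 + ((-⌊c.2⌋ : ℤ) : ℝ) = c.2 - (⌊c.2⌋ : ℝ)
      push_cast; ring
    rw [this, abs_of_nonneg (Int.fract_nonneg _)]
    exact (Int.fract_lt_one _).le
  exact rot_bound θ _ hx1 hx2

lemma oscMul_t {n : ℕ} (lam : Fin n → ℝ) (g : OscG n) (s : ℝ) :
    oscMul lam g (0, fun _ => (0,0), s) = (g.1, g.2.1, g.2.2 + s) := by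
  simp [oscMul, rot, dot2, Jpair, Prod.mk_zero_zero]

lemma oscMul_z {n : ℕ} (lam : Fin n → ℝ) (g : OscG n) (x : ℝ) :
    oscMul lam g (x, fun _ => (0,0), 0) = (g.1 + x, g.2.1, g.2.2) := by
  simp [oscMul, rot, dot2, Jpair, Prod.mk_zero_zero]

end AuxLemmas


/-- For coprime positive integers `p, q`, a positive integer `k` and
`M ∈ {1,2,4}` with `q` odd when `M > 1`, the set
`Λ_{k,q,M} = (1/(2k))ℤ × ℤ⁴ × (2πq/M)ℤ` is a lattice of `Osc₂(1, p/q)`: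
a discrete subgroup with compact quotient. -/
theorem stmt_16 (p q k M : ℕ) (hp : 0 < p) (hq : 0 < q) (hk : 0 < k)
    (hpq : Nat.Coprime p q) (hM : M = 1 ∨ M = 2 ∨ M = 4) (hodd : 1 < M → Odd q) :
    IsLattice (lam2 p q) (LamO2 k (2 * Real.pi * q / M)) := by
  set T : ℝ := 2 * Real.pi * q / M with hTdef
  have hMpos : (0:ℝ) < M := by rcases hM with h|h|h <;> subst h <;> norm_num
  have hqpos : (0:ℝ) < q := by exact_mod_cast hq
  have hkpos : (0:ℝ) < k := by exact_mod_cast hk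
  have hkne : (k:ℝ) ≠ 0 := hkpos.ne'
  have hpi := Real.pi_pos
  have hTpos : 0 < T := by rw [hTdef]; positivity
  have hcs : ∀ (c : ℤ) (i : Fin 2),
      (∃ A : ℤ, Real.cos (lam2 p q i * ((c:ℝ) * T)) = A) ∧
      (∃ B : ℤ, Real.sin (lam2 p q i * ((c:ℝ) * T)) = B) := by
    intro c i
    obtain ⟨n, hn⟩ := angle_key p q M hq hM c i
    rw [hTdef, hn]
    exact ⟨cosIntPi n, sinIntPi n⟩
  refine ⟨?_, ?_, ?_, ?_, ?_⟩
  · -- one_mem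
    exact ⟨⟨0, by simp [oscOne]⟩, fun i => ⟨⟨0, by simp [oscOne]⟩, ⟨0, by simp [oscOne]⟩⟩,
      ⟨0, by simp [oscOne]⟩⟩
  · -- mul_mem
    rintro g ⟨⟨m1, hz1⟩, hv1, ⟨c1, ht1⟩⟩ h ⟨⟨m2, hz2⟩, hv2, ⟨c2, ht2⟩⟩
    have hrot : ∀ i : Fin 2, (∃ a : ℤ, (rot (lam2 p q i * g.2.2) (h.2.1 i)).1 = a) ∧
        (∃ b : ℤ, (rot (lam2 p q i * g.2.2) (h.2.1 i)).2 = b) := by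
      intro i; rw [ht1]; exact rot_pair_int _ (hcs c1 i).1 (hcs c1 i).2 _ (hv2 i)
    have hdot : ∀ i : Fin 2,
        ∃ s : ℤ, dot2 (g.2.1 i) (Jpair (rot (lam2 p q i * g.2.2) (h.2.1 i))) = s := by
      intro i; rw [ht1]; exact rotJ_dot_int _ (hcs c1 i).1 (hcs c1 i).2 _ _ (hv1 i) (hv2 i)
    obtain ⟨s0, hs0⟩ := hdot 0
    obtain ⟨s1, hs1⟩ := hdot 1
    refine ⟨⟨m1 + m2 + (k:ℤ)*s0 + (k:ℤ)*s1, ?_⟩, fun i => ?_, ⟨c1 + c2, ?_⟩⟩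
    · show g.1 + h.1 + (1/2) * ∑ i, dot2 (g.2.1 i) (Jpair (rot (lam2 p q i * g.2.2) (h.2.1 i)))
        = _
      rw [Fin.sum_univ_two, hs0, hs1, hz1, hz2]
      push_cast
      field_simp
      ring
    · obtain ⟨⟨a1, ha1⟩, ⟨b1, hb1⟩⟩ := hv1 i
      obtain ⟨⟨a2, ha2⟩, ⟨b2, hb2⟩⟩ := hrot i
      constructor
      · refine ⟨a1 + a2, ?_⟩
        show (g.2.1 i + rot (lam2 p q i * g.2.2) (h.2.1 i)).1 = _
        rw [Prod.fst_add, ha1, ha2]; push_cast; ring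
      · refine ⟨b1 + b2, ?_⟩
        show (g.2.1 i + rot (lam2 p q i * g.2.2) (h.2.1 i)).2 = _
        rw [Prod.snd_add, hb1, hb2]; push_cast; ring
    · show g.2.2 + h.2.2 = _
      rw [ht1, ht2]; push_cast; ring
  · -- inv_mem
    rintro g ⟨⟨m1, hz1⟩, hv1, ⟨c1, ht1⟩⟩
    have hrot : ∀ i : Fin 2, (∃ a : ℤ, (rot (lam2 p q i * (-g.2.2)) (g.2.1 i)).1 = a) ∧
        (∃ b : ℤ, (rot (lam2 p q i * (-g.2.2)) (g.2.1 i)).2 = b) := by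
      intro i
      rw [ht1, show lam2 p q i * -((c1:ℝ) * T) = lam2 p q i * (((-c1 : ℤ):ℝ) * T) by
        push_cast; ring]
      exact rot_pair_int _ (hcs (-c1) i).1 (hcs (-c1) i).2 _ (hv1 i)
    refine ⟨⟨-m1, ?_⟩, fun i => ?_, ⟨-c1, ?_⟩⟩
    · show -g.1 = _
      rw [hz1]; push_cast; ring
    · obtain ⟨⟨a2, ha2⟩, ⟨b2, hb2⟩⟩ := hrot i
      constructor
      · refine ⟨-a2, ?_⟩
        show (-(rot (lam2 p q i * (-g.2.2)) (g.2.1 i))).1 = _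
        rw [Prod.fst_neg, ha2]; push_cast; ring
      · refine ⟨-b2, ?_⟩
        show (-(rot (lam2 p q i * (-g.2.2)) (g.2.1 i))).2 = _
        rw [Prod.snd_neg, hb2]; push_cast; ring
    · show -g.2.2 = _
      rw [ht1]; push_cast; ring
  · -- discrete
    apply discreteTopology_iff_isOpen_singleton.mpr
    rintro ⟨x, hx⟩
    set ε : ℝ := min (1/(2*(k:ℝ))) (min 1 T) with hε
    have hεpos : 0 < ε := lt_min (by positivity) (lt_min one_pos hTpos)
    have hkey : ∀ y ∈ LamO2 k T, dist y x < ε → y = x := by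
      intro y hy hd
      obtain ⟨⟨a1, ha1⟩, hyv, ⟨c1, ht1⟩⟩ := hy
      obtain ⟨⟨a2, ha2⟩, hxv, ⟨c2, ht2⟩⟩ := hx
      have d1 : dist y.1 x.1 ≤ dist y x := by rw [Prod.dist_eq]; exact le_max_left _ _
      have d2 : dist y.2 x.2 ≤ dist y x := by rw [Prod.dist_eq]; exact le_max_right _ _
      have dv : ∀ i : Fin 2, dist (y.2.1 i) (x.2.1 i) ≤ dist y x := by
        intro i
        refine le_trans (dist_le_pi_dist y.2.1 x.2.1 i) (le_trans ?_ d2)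
        rw [Prod.dist_eq]; exact le_max_left _ _
      have dt : dist y.2.2 x.2.2 ≤ dist y x := by
        refine le_trans ?_ d2
        rw [Prod.dist_eq]; exact le_max_right _ _
      have hz : y.1 = x.1 := by
        have hlt : |(a1:ℝ) * (1/(2*(k:ℝ))) - (a2:ℝ) * (1/(2*(k:ℝ)))| < 1/(2*(k:ℝ)) := by
          rw [mul_one_div, mul_one_div, ← ha1, ← ha2, ← Real.dist_eq]
          exact lt_of_le_of_lt d1 (lt_of_lt_of_le hd (min_le_left _ _))
        have := int_eq_of_close (by positivity) hlt
        rw [ha1, ha2, this]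
      have ht : y.2.2 = x.2.2 := by
        have hlt : |(c1:ℝ) * T - (c2:ℝ) * T| < T := by
          rw [← ht1, ← ht2, ← Real.dist_eq]
          exact lt_of_le_of_lt dt
            (lt_of_lt_of_le hd ((min_le_right _ _).trans (min_le_right _ _)))
        have := int_eq_of_close hTpos hlt
        rw [ht1, ht2, this]
      have hvv : ∀ i : Fin 2, y.2.1 i = x.2.1 i := by
        intro i
        obtain ⟨⟨a3, ha3⟩, ⟨b3, hb3⟩⟩ := hyv i
        obtain ⟨⟨a4, ha4⟩, ⟨b4, hb4⟩⟩ := hxv i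
        have dp1 : dist (y.2.1 i).1 (x.2.1 i).1 ≤ dist (y.2.1 i) (x.2.1 i) := by
          rw [Prod.dist_eq]; exact le_max_left _ _
        have dp2 : dist (y.2.1 i).2 (x.2.1 i).2 ≤ dist (y.2.1 i) (x.2.1 i) := by
          rw [Prod.dist_eq]; exact le_max_right _ _
        have hb : dist (y.2.1 i) (x.2.1 i) < 1 :=
          lt_of_le_of_lt (dv i)
            (lt_of_lt_of_le hd ((min_le_right _ _).trans (min_le_left _ _)))
        have h1 : |(a3:ℝ) * 1 - (a4:ℝ) * 1| < 1 := by
          rw [mul_one, mul_one, ← ha3, ← ha4, ← Real.dist_eq]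
          exact lt_of_le_of_lt dp1 hb
        have h2 : |(b3:ℝ) * 1 - (b4:ℝ) * 1| < 1 := by
          rw [mul_one, mul_one, ← hb3, ← hb4, ← Real.dist_eq]
          exact lt_of_le_of_lt dp2 hb
        have e1 := int_eq_of_close one_pos h1
        have e2 := int_eq_of_close one_pos h2
        refine Prod.ext_iff.mpr ⟨?_, ?_⟩
        · rw [ha3, ha4, e1]
        · rw [hb3, hb4, e2]
      exact Prod.ext_iff.mpr ⟨hz, Prod.ext_iff.mpr ⟨funext hvv, ht⟩⟩
    have hset : (Subtype.val ⁻¹' Metric.ball x ε : Set ↥(LamO2 k T)) = {⟨x, hx⟩} := by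
      ext y
      simp only [Set.mem_preimage, Metric.mem_ball, Set.mem_singleton_iff]
      constructor
      · intro hy; exact Subtype.ext (hkey y.1 y.2 hy)
      · rintro rfl; simpa using hεpos
    rw [← hset]
    exact Metric.isOpen_ball.preimage continuous_subtype_val
  · -- cocompact
    constructor
    set r : OscG 2 → OscG 2 → Prop :=
      fun g h => ∃ γ ∈ LamO2 k T, h = oscMul (lam2 p q) g γ with hr
    set K : Set (OscG 2) :=
      Set.Icc (0:ℝ) 1 ×ˢ ((Set.univ.pi fun _ : Fin 2 =>
        Set.Icc (-2:ℝ) 2 ×ˢ Set.Icc (-2:ℝ) 2) ×ˢ Set.Icc (0:ℝ) T) with hKdef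
    have hKc : IsCompact K :=
      isCompact_Icc.prod ((isCompact_univ_pi fun _ =>
        isCompact_Icc.prod isCompact_Icc).prod isCompact_Icc)
    have hsurj : ∀ g : OscG 2, ∃ x ∈ K, Quot.mk r g = Quot.mk r x := by
      rintro ⟨z, v, t⟩
      -- step 1 : normalize t
      have hγ1 : ((0:ℝ), (fun _ => ((0:ℝ),(0:ℝ)) : Fin 2 → ℝ × ℝ),
          ((-⌊t/T⌋ : ℤ) : ℝ) * T) ∈ LamO2 k T :=
        ⟨⟨0, by simp⟩, fun i => ⟨⟨0, by norm_num⟩, ⟨0, by norm_num⟩⟩, ⟨-⌊t/T⌋, rfl⟩⟩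
      have hstep1 : oscMul (lam2 p q) (z, v, t)
          (0, fun _ => (0,0), ((-⌊t/T⌋ : ℤ) : ℝ) * T) = (z, v, T * Int.fract (t/T)) := by
        rw [oscMul_t]
        have he : t + ((-⌊t/T⌋ : ℤ) : ℝ) * T = T * Int.fract (t/T) := by
          show _ = T * (t/T - (⌊t/T⌋ : ℝ))
          push_cast
          field_simp
          ring
        rw [he]
      have q1 : Quot.mk r (z, v, t) = Quot.mk r (z, v, T * Int.fract (t/T)) :=
        Quot.sound ⟨_, hγ1, hstep1.symm⟩
      set t₁ : ℝ := T * Int.fract (t/T) with ht₁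
      -- step 2 : reduce v
      choose u hu1 hu2 hu3 hu4 using fun i : Fin 2 => reduce_pair (lam2 p q i * t₁) (v i)
      have hγ2 : ((0:ℝ), u, (0:ℝ)) ∈ LamO2 k T :=
        ⟨⟨0, by simp⟩, fun i => ⟨hu1 i, hu2 i⟩, ⟨0, by simp⟩⟩
      have q2 : Quot.mk r (z, v, t₁) = Quot.mk r (oscMul (lam2 p q) (z, v, t₁) (0, u, 0)) :=
        Quot.sound ⟨_, hγ2, rfl⟩
      -- step 3 : reduce z
      have hγ3 : ∀ mz : ℤ, (((mz:ℝ)/(2*(k:ℝ))), (fun _ => ((0:ℝ),(0:ℝ)) : Fin 2 → ℝ × ℝ),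
          (0:ℝ)) ∈ LamO2 k T :=
        fun mz => ⟨⟨mz, rfl⟩, fun i => ⟨⟨0, by norm_num⟩, ⟨0, by norm_num⟩⟩, ⟨0, by simp⟩⟩
      set w : ℝ := (oscMul (lam2 p q) (z, v, t₁) (0, u, 0)).1 with hw
      set mz : ℤ := -⌊w * (2*(k:ℝ))⌋ with hmz
      have hstep3 : oscMul (lam2 p q) (oscMul (lam2 p q) (z, v, t₁) (0, u, 0))
          ((mz:ℝ)/(2*(k:ℝ)), fun _ => (0,0), 0)
          = (w + (mz:ℝ)/(2*(k:ℝ)), fun i => v i + rot (lam2 p q i * t₁) (u i), t₁) := by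
        rw [oscMul_z, hw]
        show (w + _, fun i => v i + rot (lam2 p q i * t₁) (u i), t₁ + 0) = _
        rw [add_zero]
      have q3 : Quot.mk r (oscMul (lam2 p q) (z, v, t₁) (0, u, 0))
          = Quot.mk r (w + (mz:ℝ)/(2*(k:ℝ)),
              fun i => v i + rot (lam2 p q i * t₁) (u i), t₁) :=
        Quot.sound ⟨_, hγ3 mz, hstep3.symm⟩
      refine ⟨(w + (mz:ℝ)/(2*(k:ℝ)), fun i => v i + rot (lam2 p q i * t₁) (u i), t₁),
        ⟨?_, ?_, ?_⟩, (q1.trans q2).trans q3⟩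
      · -- z bound
        have h2k : (0:ℝ) < 2*(k:ℝ) := by positivity
        have hzeq : w + (mz:ℝ)/(2*(k:ℝ)) = Int.fract (w * (2*(k:ℝ))) / (2*(k:ℝ)) := by
          rw [hmz]
          show _ = (w * (2*(k:ℝ)) - (⌊w * (2*(k:ℝ))⌋ : ℝ)) / (2*(k:ℝ))
          push_cast
          field_simp
          exact Int.self_sub_floor _
        show w + (mz:ℝ)/(2*(k:ℝ)) ∈ Set.Icc (0:ℝ) 1
        rw [hzeq]
        constructor
        · exact div_nonneg (Int.fract_nonneg _) h2k.le
        · rw [div_le_one h2k]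
          have h1 : Int.fract (w * (2*(k:ℝ))) ≤ 1 := (Int.fract_lt_one _).le
          have h2 : (1:ℝ) ≤ (k:ℝ) := by exact_mod_cast hk
          linarith
      · -- v bound
        intro i _
        exact ⟨abs_le.mp (hu3 i), abs_le.mp (hu4 i)⟩
      · -- t bound
        show t₁ ∈ Set.Icc (0:ℝ) T
        rw [ht₁]
        constructor
        · exact mul_nonneg hTpos.le (Int.fract_nonneg _)
        · exact mul_le_of_le_one_right hTpos.le (Int.fract_lt_one _).le
    have himg : Quot.mk r '' K = Set.univ := by
      apply Set.eq_univ_of_forall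
      intro y
      obtain ⟨g, rfl⟩ := Quot.exists_rep y
      obtain ⟨x, hxK, hxe⟩ := hsurj g
      exact ⟨x, hxK, hxe.symm⟩
    rw [← himg]
    exact hKc.image continuous_quot_mk
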